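/- For every ε > 0 there exists d₀ such that for all d ≥ d₀ the following holds: if G is a properly edge-coloured graph on n vertices with average degree at least d and maximum degree Δ ≤ εn/4, then G contains a rainbow path forest with at most ⌈log_{8/7}(1/ε)⌉ components and at least (1−ε)d edges. -/

import Mathlib

/-- A proper edge-colouring of an undirected graph: the colour function is symmetric on
edges, and no two edges sharing a vertex have the same colour. -/
def IsProperEdgeColoring {V C : Type*} (G : SimpleGraph V) (c : V → V → C) : Prop :=
  (∀ u v, G.Adj u v → c u v = c v u) ∧
  (∀ u v w, G.Adj u v → G.Adj u w → v ≠ w → c u v ≠ c u w)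

/-- A rainbow path forest with `t` components: `t` vertex-disjoint paths (the `j`-th of
length `ℓ j`), all of whose edges have pairwise distinct colours. -/
def IsRainbowPathForest {V C : Type*} (G : SimpleGraph V) (c : V → V → C) {t : ℕ}
    (ℓ : Fin t → ℕ) (p : ∀ j, Fin (ℓ j + 1) → V) : Prop :=
  (∀ (j) (i : Fin (ℓ j)), G.Adj (p j i.castSucc) (p j i.succ)) ∧
  Function.Injective (fun q : Σ j, Fin (ℓ j + 1) => p q.1 q.2) ∧
  Function.Injective (fun q : Σ j, Fin (ℓ j) => c (p q.1 q.2.castSucc) (p q.1 q.2.succ))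


variable {V C : Type} [Fintype V] [DecidableEq V] [DecidableEq C]


omit [Fintype V] in
/-- Sum identity when erasing a vertex. -/
lemma sum_deg_erase (A : V → V → Prop) [DecidableRel A] (hA : Symmetric A)
    (hirr : ∀ v, ¬ A v v) (U : Finset V) (v₀ : V) (h₀ : v₀ ∈ U) :
    ∑ v ∈ U.erase v₀, ((((U.erase v₀).filter (A v)).card : ℝ)) =
      ∑ v ∈ U, (((U.filter (A v)).card : ℝ)) - 2 * ((U.filter (A v₀)).card : ℝ) := by
  have key : ∀ v ∈ U.erase v₀,
      ((((U.erase v₀).filter (A v)).card : ℝ)) =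
        ((U.filter (A v)).card : ℝ) - (if A v v₀ then (1:ℝ) else 0) := by
    intro v hv
    have : (U.erase v₀).filter (A v) = (U.filter (A v)).erase v₀ := by
      ext x; simp [Finset.mem_erase, Finset.mem_filter]; tauto
    rw [this]
    by_cases hAv : A v v₀
    · have hm : v₀ ∈ U.filter (A v) := Finset.mem_filter.2 ⟨h₀, hAv⟩
      rw [Finset.card_erase_of_mem hm, if_pos hAv]
      have : 1 ≤ (U.filter (A v)).card := Finset.card_pos.2 ⟨v₀, hm⟩
      push_cast [this]; ring
    · rw [Finset.erase_eq_of_notMem (by simp [Finset.mem_filter, hAv]), if_neg hAv]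
      ring
  rw [Finset.sum_congr rfl key, Finset.sum_sub_distrib]
  have h1 : ∑ v ∈ U.erase v₀, ((U.filter (A v)).card : ℝ) =
      ∑ v ∈ U, ((U.filter (A v)).card : ℝ) - ((U.filter (A v₀)).card : ℝ) := by
    rw [← Finset.sum_erase_add U _ h₀]; ring
  have h2 : ∑ v ∈ U.erase v₀, (if A v v₀ then (1:ℝ) else 0) =
      ((U.filter (A v₀)).card : ℝ) := by
    rw [Finset.sum_ite, Finset.sum_const_zero, add_zero, Finset.sum_const,
      nsmul_eq_mul, mul_one]
    congr 1
    have : (U.erase v₀).filter (fun v => A v v₀) = U.filter (A v₀) := by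
      ext x
      simp only [Finset.mem_filter, Finset.mem_erase]
      constructor
      · rintro ⟨⟨_, hx⟩, hAx⟩; exact ⟨hx, hA hAx⟩
      · rintro ⟨hx, hAx⟩; exact ⟨⟨fun e => hirr v₀ (e ▸ hAx), hx⟩, hA hAx⟩
    rw [this]
  rw [h1, h2]; ring

omit [Fintype V] in
/-- Every graph (relation) with average degree at least a on U has a nonempty subset with
min degree at least a/2. -/
lemma exists_min_deg (A : V → V → Prop) [DecidableRel A] (hA : Symmetric A)
    (hirr : ∀ v, ¬ A v v) :
    ∀ (n : ℕ) (U : Finset V) (a : ℝ), U.card ≤ n → U.Nonempty →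
      a * U.card ≤ ∑ v ∈ U, ((U.filter (A v)).card : ℝ) →
      ∃ W : Finset V, W ⊆ U ∧ W.Nonempty ∧ ∀ v ∈ W, a ≤ 2 * ((W.filter (A v)).card : ℝ) := by
  intro n
  induction n with
  | zero =>
    intro U a hcard hne _
    obtain ⟨x, hx⟩ := hne
    exact absurd (Finset.card_pos.2 ⟨x, hx⟩) (by omega)
  | succ n ih =>
    intro U a hcard hne havg
    by_cases hall : ∀ v ∈ U, a ≤ 2 * ((U.filter (A v)).card : ℝ)
    · exact ⟨U, le_refl _, hne, hall⟩
    · push_neg at hall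
      obtain ⟨v₀, hv₀, hbad⟩ := hall
      have hU' : (U.erase v₀).Nonempty := by
        rcases Finset.eq_empty_or_nonempty (U.erase v₀) with he | hne'
        · exfalso
          have hU1 : U = {v₀} := by
            apply Finset.eq_singleton_iff_unique_mem.2
            refine ⟨hv₀, fun x hx => ?_⟩
            by_contra hxne
            exact Finset.notMem_empty x (he ▸ Finset.mem_erase.2 ⟨hxne, hx⟩)
          rw [hU1] at havg hbad
          simp only [Finset.sum_singleton, Finset.card_singleton] at havg
          have : (({v₀} : Finset V).filter (A v₀)).card = 0 := by
            rw [Finset.filter_singleton, if_neg (hirr v₀), Finset.card_empty]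
          rw [this] at havg hbad
          push_cast at havg hbad
          linarith
        · exact hne'
      have hsum := sum_deg_erase A hA hirr U v₀ hv₀
      have hcard' : (U.erase v₀).card ≤ n := by
        have := Finset.card_erase_of_mem hv₀; omega
      have havg' : a * (U.erase v₀).card ≤ ∑ v ∈ U.erase v₀, (((U.erase v₀).filter (A v)).card : ℝ) := by
        rw [hsum, Finset.card_erase_of_mem hv₀]
        have h1 : 1 ≤ U.card := Finset.card_pos.2 hne
        have : ((U.card - 1 : ℕ) : ℝ) = (U.card : ℝ) - 1 := by push_cast [h1]; ring
        rw [this]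
        nlinarith [havg, hbad]
      obtain ⟨W, hWU, hWne, hW⟩ := ih (U.erase v₀) a hcard' hU' havg'
      exact ⟨W, hWU.trans (Finset.erase_subset _ _), hWne, hW⟩

/-- List of edge colours along a path given as a list of vertices. -/
def ecs (c : V → V → C) : List V → List C
  | a :: b :: r => c a b :: ecs c (b :: r)
  | _ => []

omit [Fintype V] [DecidableEq V] [DecidableEq C] in
lemma ecs_nil (c : V → V → C) : ecs c [] = [] := rfl

omit [Fintype V] [DecidableEq V] [DecidableEq C] in
lemma ecs_single (c : V → V → C) (a : V) : ecs c [a] = [] := rfl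

omit [Fintype V] [DecidableEq V] [DecidableEq C] in
lemma ecs_cons (c : V → V → C) (a b : V) (r : List V) :
    ecs c (a :: b :: r) = c a b :: ecs c (b :: r) := rfl

omit [Fintype V] [DecidableEq V] [DecidableEq C] in
lemma ecs_length (c : V → V → C) : ∀ l : List V, (ecs c l).length = l.length - 1
  | [] => rfl
  | [_] => rfl
  | a :: b :: r => by rw [ecs_cons]; simp [ecs_length c (b :: r)]

omit [Fintype V] [DecidableEq V] [DecidableEq C] in
lemma ecs_getElem (c : V → V → C) : ∀ (l : List V) (i : ℕ) (h : i < (ecs c l).length),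
    (ecs c l)[i] = c (l[i]'(by rw [ecs_length] at h; omega))
                     (l[i+1]'(by rw [ecs_length] at h; omega))
  | a :: b :: r, 0, h => rfl
  | a :: b :: r, (i+1), h => by
      have h' : i < (ecs c (b :: r)).length := by rw [ecs_cons] at h; simpa using h
      simp only [ecs_cons, List.getElem_cons_succ]
      exact ecs_getElem c (b :: r) i h'

omit [Fintype V] [DecidableEq V] [DecidableEq C] in
lemma ecs_take (c : V → V → C) : ∀ (l : List V) (n : ℕ),
    ecs c (l.take (n+1)) = (ecs c l).take n
  | [], n => by simp [ecs_nil]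
  | [a], n => by cases n <;> simp [ecs_single, ecs_nil]
  | a :: b :: r, 0 => by simp [ecs_single, ecs_cons]
  | a :: b :: r, (n+1) => by
      calc ecs c ((a :: b :: r).take (n+1+1))
          = ecs c (a :: b :: r.take n) := by rw [List.take_succ_cons, List.take_succ_cons]
        _ = c a b :: ecs c (b :: r.take n) := ecs_cons c a b (r.take n)
        _ = c a b :: ecs c ((b :: r).take (n+1)) := by rw [List.take_succ_cons]
        _ = c a b :: (ecs c (b :: r)).take n := by rw [ecs_take c (b :: r) n]
        _ = (ecs c (a :: b :: r)).take (n+1) := by rw [ecs_cons, List.take_succ_cons]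

/-- A rainbow path (as list of vertices) for relation A and colouring c. -/
def RPath (A : V → V → Prop) (c : V → V → C) (l : List V) : Prop :=
  l ≠ [] ∧ l.Chain' A ∧ l.Nodup ∧ (ecs c l).Nodup

/-- Greedy maximal rainbow path: min degree ≥ a/2 on U gives a rainbow path with
at least a/4 edges. -/
lemma exists_rpath (A : V → V → Prop) [DecidableRel A] (c : V → V → C)
    (hA : Symmetric A) (hirr : ∀ v, ¬ A v v)
    (hc1 : ∀ u v, A u v → c u v = c v u)
    (hc2 : ∀ u v w, A u v → A u w → v ≠ w → c u v ≠ c u w)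
    (U : Finset V) (hU : U.Nonempty) (a : ℝ)
    (hdeg : ∀ v ∈ U, a ≤ 2 * ((U.filter (A v)).card : ℝ)) :
    ∃ l : List V, RPath A c l ∧ (∀ x ∈ l, x ∈ U) ∧ a ≤ 4 * ((l.length : ℝ) - 1) := by
  set P : List V → Prop := fun l => RPath A c l ∧ ∀ x ∈ l, x ∈ U with hP
  have hlen : ∀ l, P l → l.length ≤ U.card := by
    rintro l ⟨⟨_, _, hnd, _⟩, hsub⟩
    calc l.length = l.toFinset.card := (List.toFinset_card_of_nodup hnd).symm
      _ ≤ U.card := Finset.card_le_card (fun x hx => hsub x (List.mem_toFinset.1 hx))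
  have max_aux : ∀ (m : ℕ) (l), P l → U.card + 1 - l.length ≤ m →
      ∃ l', P l' ∧ l.length ≤ l'.length ∧
        ∀ u v t, l' = v :: t → u ∈ U → A u v → u ∈ l' ∨ c u v ∈ ecs c l' := by
    intro m
    induction m with
    | zero => intro l hl hm; exact absurd (hlen l hl) (by omega)
    | succ m ih =>
      intro l hl hm
      by_cases hex : ∃ u v t, l = v :: t ∧ u ∈ U ∧ A u v ∧ u ∉ l ∧ c u v ∉ ecs c l
      · obtain ⟨u, v, t, rfl, huU, huv, hunotin, hcnotin⟩ := hex
        have hl' : P (u :: v :: t) := by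
          obtain ⟨⟨hne, hch, hnd, hcnd⟩, hsub⟩ := hl
          refine ⟨⟨List.cons_ne_nil _ _, List.isChain_cons_cons.2 ⟨huv, hch⟩,
            List.nodup_cons.2 ⟨hunotin, hnd⟩, ?_⟩, ?_⟩
          · rw [ecs_cons]; exact List.nodup_cons.2 ⟨hcnotin, hcnd⟩
          · intro x hx
            rcases List.mem_cons.1 hx with rfl | hx'
            · exact huU
            · exact hsub x hx'
        have hm' : U.card + 1 - (u :: v :: t).length ≤ m := by
          have := hlen _ hl'
          simp only [List.length_cons] at *
          omega
        obtain ⟨l', hPl', hll', hnext⟩ := ih (u :: v :: t) hl' hm'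
        refine ⟨l', hPl', ?_, hnext⟩
        simp only [List.length_cons] at *
        omega
      · refine ⟨l, hl, le_refl _, ?_⟩
        intro u v t hlvt huU huv
        by_contra hcon
        push_neg at hcon
        exact hex ⟨u, v, t, hlvt, huU, huv, hcon.1, hcon.2⟩
  obtain ⟨x, hx⟩ := hU
  have hP0 : P [x] := by
    refine ⟨⟨List.cons_ne_nil _ _, List.isChain_singleton _, List.nodup_singleton _, ?_⟩, ?_⟩
    · rw [ecs_single]; exact List.nodup_nil
    · intro y hy; rw [List.mem_singleton] at hy; exact hy ▸ hx
  obtain ⟨l, hPl, _, hnext⟩ := max_aux (U.card + 1) [x] hP0 (by omega)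
  obtain ⟨⟨hne, hch, hnd, hcnd⟩, hsub⟩ := hPl
  obtain ⟨v, t, rfl⟩ := List.exists_cons_of_ne_nil hne
  set k := t.length with hk
  refine ⟨v :: t, ⟨hne, hch, hnd, hcnd⟩, hsub, ?_⟩
  -- degree bound
  set N := U.filter (A v) with hN
  set N1 := (v :: t).toFinset.erase v with hN1
  set N2 := N.filter (fun u => c v u ∈ ecs c (v :: t)) with hN2
  have hNsub : N ⊆ N1 ∪ N2 := by
    intro u hu
    have huU : u ∈ U := (Finset.mem_filter.1 hu).1
    have hAvu : A v u := (Finset.mem_filter.1 hu).2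
    have huv : u ≠ v := fun e => hirr v (e ▸ hAvu)
    rcases hnext u v t rfl huU (hA hAvu) with hin | hcin
    · exact Finset.mem_union_left _ (Finset.mem_erase.2 ⟨huv, List.mem_toFinset.2 hin⟩)
    · refine Finset.mem_union_right _ (Finset.mem_filter.2 ⟨hu, ?_⟩)
      rwa [← hc1 u v (hA hAvu)]
  have hN1card : N1.card ≤ k := by
    rw [hN1, Finset.card_erase_of_mem (List.mem_toFinset.2 List.mem_cons_self)]
    have : (v :: t).toFinset.card = k + 1 := by
      rw [List.toFinset_card_of_nodup hnd]; simp [hk]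
    omega
  have hN2card : N2.card ≤ k := by
    have h1 : N2.card ≤ (ecs c (v :: t)).toFinset.card := by
      apply Finset.card_le_card_of_injOn (fun u => c v u)
      · intro u hu
        exact List.mem_toFinset.2 (Finset.mem_filter.1 hu).2
      · intro u hu u' hu' he
        by_contra hne'
        have hAu : A v u := (Finset.mem_filter.1 ((Finset.mem_filter.1 hu).1)).2
        have hAu' : A v u' := (Finset.mem_filter.1 ((Finset.mem_filter.1 hu').1)).2
        exact hc2 v u u' hAu hAu' hne' he
    have h2 : (ecs c (v :: t)).toFinset.card ≤ k := by
      calc (ecs c (v :: t)).toFinset.card ≤ (ecs c (v :: t)).length := List.toFinset_card_le _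
        _ = k := by rw [ecs_length]; simp [hk]
    omega
  have hNcard : N.card ≤ 2 * k := by
    calc N.card ≤ (N1 ∪ N2).card := Finset.card_le_card hNsub
      _ ≤ N1.card + N2.card := Finset.card_union_le _ _
      _ ≤ 2 * k := by omega
  have hdv := hdeg v (hsub v List.mem_cons_self)
  have : ((v :: t).length : ℝ) - 1 = (k : ℝ) := by simp [hk]
  rw [this]
  have : (N.card : ℝ) ≤ 2 * k := by exact_mod_cast hNcard
  calc a ≤ 2 * (N.card : ℝ) := hdv
    _ ≤ 4 * (k : ℝ) := by linarith

omit [Fintype V] [DecidableEq C] in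
lemma exists_rpath_avg [Fintype V] [Nonempty V] (A : V → V → Prop) [DecidableRel A]
    (c : V → V → C)
    (hA : Symmetric A) (hirr : ∀ v, ¬ A v v)
    (hc1 : ∀ u v, A u v → c u v = c v u)
    (hc2 : ∀ u v w, A u v → A u w → v ≠ w → c u v ≠ c u w)
    (a : ℝ)
    (havg : a * (Fintype.card V) ≤ ∑ v, ((Finset.univ.filter (A v)).card : ℝ)) :
    ∃ l : List V, RPath A c l ∧ a ≤ 4 * ((l.length : ℝ) - 1) := by
  classical
  obtain ⟨W, _, hWne, hW⟩ := exists_min_deg A hA hirr (Finset.univ.card) Finset.univ a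
    (le_refl _) Finset.univ_nonempty (by rwa [Finset.card_univ])
  obtain ⟨l, hl, _, hlen⟩ := exists_rpath A c hA hirr hc1 hc2 W hWne a hW
  exact ⟨l, hl, hlen⟩

lemma count_step (G : SimpleGraph V) [DecidableRel G.Adj] (c : V → V → C)
    (hc : IsProperEdgeColoring G c)
    (S : Finset V) (F : Finset C) (ε d : ℝ)
    (hd : d * (Fintype.card V) ≤ 2 * (G.edgeSet.ncard : ℝ))
    (hΔ : ∀ v, ((G.neighborSet v).ncard : ℝ) ≤ ε * (Fintype.card V) / 4) :
    (d - (S.card : ℝ) * ε / 2 - F.card) * (Fintype.card V) ≤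
      ∑ v, ((Finset.univ.filter
        (fun u => G.Adj v u ∧ v ∉ S ∧ u ∉ S ∧ c v u ∉ F)).card : ℝ) := by
  classical
  set n := Fintype.card V with hn
  -- basic conversions
  have hdegfin : ∀ v, G.neighborFinset v = Finset.univ.filter (G.Adj v) := by
    intro v; ext u; simp [SimpleGraph.mem_neighborFinset]
  have hnbr : ∀ v, ((G.neighborSet v).ncard : ℝ) = ((Finset.univ.filter (G.Adj v)).card : ℝ) := by
    intro v
    have : G.neighborSet v = ↑(Finset.univ.filter (G.Adj v)) := by
      ext u; simp [SimpleGraph.mem_neighborSet]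
    rw [this, Set.ncard_coe_finset]
  have hsumdeg : d * n ≤ ∑ v, ((Finset.univ.filter (G.Adj v)).card : ℝ) := by
    have h1 : (G.edgeSet.ncard : ℝ) = (G.edgeFinset.card : ℝ) := by
      rw [← SimpleGraph.coe_edgeFinset, Set.ncard_coe_finset]
    have h2 : ∑ v, G.degree v = 2 * G.edgeFinset.card :=
      SimpleGraph.sum_degrees_eq_twice_card_edges G
    have h2' : ∑ v, (Finset.univ.filter (G.Adj v)).card = 2 * G.edgeFinset.card := by
      rw [← h2]
      exact Finset.sum_congr rfl fun v _ => by rw [← hdegfin v]; rfl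
    have h3 : ∑ v, ((Finset.univ.filter (G.Adj v)).card : ℝ) = 2 * (G.edgeFinset.card : ℝ) := by
      rw [← Nat.cast_sum, h2']; push_cast; ring
    rw [h3, ← h1]
    exact hd
  have hΔ' : ∀ v, ((Finset.univ.filter (G.Adj v)).card : ℝ) ≤ ε * n / 4 := by
    intro v; rw [← hnbr v]; exact hΔ v
  -- per-vertex bound
  have hper : ∀ v, ((Finset.univ.filter (G.Adj v)).card : ℝ) ≤
      ((Finset.univ.filter (fun u => G.Adj v u ∧ v ∉ S ∧ u ∉ S ∧ c v u ∉ F)).card : ℝ)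
      + (if v ∈ S then ((Finset.univ.filter (G.Adj v)).card : ℝ) else 0)
      + ((S.filter (G.Adj v)).card : ℝ) + (F.card : ℝ) := by
    intro v
    by_cases hvS : v ∈ S
    · rw [if_pos hvS]
      have h0 : (0:ℝ) ≤ ((Finset.univ.filter (fun u => G.Adj v u ∧ v ∉ S ∧ u ∉ S ∧ c v u ∉ F)).card : ℝ) := by positivity
      have h1 : (0:ℝ) ≤ ((S.filter (G.Adj v)).card : ℝ) := by positivity
      have h2 : (0:ℝ) ≤ (F.card : ℝ) := by positivity
      linarith
    · rw [if_neg hvS]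
      have hsub : Finset.univ.filter (G.Adj v) ⊆
          (Finset.univ.filter (fun u => G.Adj v u ∧ v ∉ S ∧ u ∉ S ∧ c v u ∉ F))
          ∪ (S.filter (G.Adj v))
          ∪ (Finset.univ.filter (fun u => G.Adj v u ∧ c v u ∈ F)) := by
        intro u hu
        have hadj : G.Adj v u := (Finset.mem_filter.1 hu).2
        by_cases huS : u ∈ S
        · exact Finset.mem_union_left _ (Finset.mem_union_right _
            (Finset.mem_filter.2 ⟨huS, hadj⟩))
        · by_cases hcF : c v u ∈ F
          · exact Finset.mem_union_right _ (Finset.mem_filter.2 ⟨Finset.mem_univ _, hadj, hcF⟩)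
          · exact Finset.mem_union_left _ (Finset.mem_union_left _
              (Finset.mem_filter.2 ⟨Finset.mem_univ _, hadj, hvS, huS, hcF⟩))
      have hFbd : (Finset.univ.filter (fun u => G.Adj v u ∧ c v u ∈ F)).card ≤ F.card := by
        apply Finset.card_le_card_of_injOn (fun u => c v u)
        · intro u hu; exact (Finset.mem_filter.1 hu).2.2
        · intro u hu u' hu' he
          by_contra hne'
          exact hc.2 v u u' (Finset.mem_filter.1 hu).2.1 (Finset.mem_filter.1 hu').2.1 hne' he
      have := Finset.card_le_card hsub
      have hu2 := Finset.card_union_le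
        ((Finset.univ.filter (fun u => G.Adj v u ∧ v ∉ S ∧ u ∉ S ∧ c v u ∉ F))
          ∪ (S.filter (G.Adj v)))
        (Finset.univ.filter (fun u => G.Adj v u ∧ c v u ∈ F))
      have hu3 := Finset.card_union_le
        (Finset.univ.filter (fun u => G.Adj v u ∧ v ∉ S ∧ u ∉ S ∧ c v u ∉ F))
        (S.filter (G.Adj v))
      have : (Finset.univ.filter (G.Adj v)).card ≤
          (Finset.univ.filter (fun u => G.Adj v u ∧ v ∉ S ∧ u ∉ S ∧ c v u ∉ F)).card
          + (S.filter (G.Adj v)).card + F.card := by omega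
      exact_mod_cast this
  -- sum the bound
  have hsum1 : ∑ v, (if v ∈ S then ((Finset.univ.filter (G.Adj v)).card : ℝ) else 0)
      ≤ (S.card : ℝ) * (ε * n / 4) := by
    rw [Finset.sum_ite_mem, Finset.univ_inter]
    calc ∑ v ∈ S, ((Finset.univ.filter (G.Adj v)).card : ℝ)
        ≤ ∑ v ∈ S, (ε * n / 4) := Finset.sum_le_sum (fun v _ => hΔ' v)
      _ = (S.card : ℝ) * (ε * n / 4) := by rw [Finset.sum_const]; ring
  have hsum2 : ∑ v, ((S.filter (G.Adj v)).card : ℝ) ≤ (S.card : ℝ) * (ε * n / 4) := by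
    have hdc : ∑ v, ((S.filter (G.Adj v)).card : ℕ) = ∑ u ∈ S, (Finset.univ.filter (G.Adj u)).card := by
      simp only [Finset.card_filter]
      rw [Finset.sum_comm]
      apply Finset.sum_congr rfl
      intro u _
      apply Finset.sum_congr rfl
      intro v _
      simp [SimpleGraph.adj_comm]
    have : ∑ v, ((S.filter (G.Adj v)).card : ℝ) = ∑ u ∈ S, ((Finset.univ.filter (G.Adj u)).card : ℝ) := by
      rw [← Nat.cast_sum, ← Nat.cast_sum]; exact congrArg Nat.cast hdc
    rw [this]
    calc ∑ u ∈ S, ((Finset.univ.filter (G.Adj u)).card : ℝ)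
        ≤ ∑ u ∈ S, (ε * n / 4) := Finset.sum_le_sum (fun u _ => hΔ' u)
      _ = (S.card : ℝ) * (ε * n / 4) := by rw [Finset.sum_const]; ring
  have hsum3 : ∑ _v : V, (F.card : ℝ) = (n : ℝ) * F.card := by
    rw [Finset.sum_const, Finset.card_univ]; ring
  have htot := Finset.sum_le_sum (fun v (_ : v ∈ Finset.univ) => hper v)
  simp only [Finset.sum_add_distrib] at htot
  rw [hsum3] at htot
  have := hsumdeg
  nlinarith [hsum1, hsum2, htot]

omit [Fintype V] [DecidableEq V] [DecidableEq C] in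
lemma sum_lengths_eq (L : List (List V)) (hne : ∀ l ∈ L, l ≠ []) :
    (L.map List.length).sum = (L.map fun l => l.length - 1).sum + L.length := by
  induction L with
  | nil => simp
  | cons a L ih =>
    have ha : a ≠ [] := hne a List.mem_cons_self
    have h1 : 1 ≤ a.length := List.length_pos_iff.2 ha
    have := ih (fun l hl => hne l (List.mem_cons_of_mem _ hl))
    simp only [List.map_cons, List.sum_cons, List.length_cons]
    omega

lemma chain'_exists_rel {α : Type*} (R : α → α → Prop) (l : List α) (hch : l.Chain' R)
    (hlen : 2 ≤ l.length) : ∀ x ∈ l, ∃ y ∈ l, R x y ∨ R y x := by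
  intro x hx
  obtain ⟨i, hi, rfl⟩ := List.mem_iff_getElem.1 hx
  replace hch := List.isChain_iff_getElem.1 hch
  by_cases h : i + 1 < l.length
  · refine ⟨l[i+1], List.getElem_mem _, Or.inl ?_⟩
    have := hch i (by omega)
    simpa using this
  · have hi1 : 1 ≤ i := by omega
    refine ⟨l[i-1]'(by omega), List.getElem_mem _, Or.inr ?_⟩
    have := hch (i-1) (by omega)
    have h2 : i - 1 + 1 = i := by omega
    convert this using 2
    omega

lemma main_loop (G : SimpleGraph V) [DecidableRel G.Adj] (c : V → V → C)
    (hc : IsProperEdgeColoring G c) [Nonempty V]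
    (ε d : ℝ) (hε : 0 < ε) (k : ℕ) (hd0 : 8 * ((k : ℝ) + 1) ≤ d)
    (hd : d * (Fintype.card V) ≤ 2 * (G.edgeSet.ncard : ℝ))
    (hΔ : ∀ v, ((G.neighborSet v).ncard : ℝ) ≤ ε * (Fintype.card V) / 4) :
    ∀ i, i ≤ k → ∃ L : List (List V),
      (∀ l ∈ L, l ≠ []) ∧ (∀ l ∈ L, l.Chain' G.Adj) ∧
      L.flatten.Nodup ∧ (L.map (ecs c)).flatten.Nodup ∧
      L.length ≤ i ∧
      d - (((L.map fun l => l.length - 1).sum : ℕ) : ℝ) ≤ max ((7/8)^i * d) (ε * d) := by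
  have hd_pos : (0:ℝ) < d := lt_of_lt_of_le (by positivity : (0:ℝ) < 8 * ((k:ℝ)+1)) hd0
  intro i
  induction i with
  | zero =>
    intro _
    refine ⟨[], by simp, by simp, by simp, by simp, by simp, ?_⟩
    simp only [List.map_nil, List.sum_nil, Nat.cast_zero, sub_zero, pow_zero, one_mul]
    exact le_max_left _ _
  | succ i ih =>
    intro hik
    obtain ⟨L, hLne, hLch, hLnd, hLcnd, hLlen, hLD⟩ := ih (by omega)
    set m : ℕ := (L.map fun l => l.length - 1).sum with hm
    set D : ℝ := d - (m : ℝ) with hD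
    by_cases hstop : D ≤ ε * d
    · refine ⟨L, hLne, hLch, hLnd, hLcnd, by omega, ?_⟩
      rw [← hm, ← hD]
      exact hstop.trans (le_max_right _ _)
    push_neg at hstop
    -- D > ε d > 0
    have hεd_pos : 0 < ε * d := by positivity
    have hD_pos : 0 < D := hεd_pos.trans hstop
    have hm_le_d : (m : ℝ) < d := by rw [hD] at hD_pos; linarith
    set S : Finset V := L.flatten.toFinset with hS
    set F : Finset C := (L.map (ecs c)).flatten.toFinset with hF
    set t : ℕ := L.length with ht
    have hScard : S.card = m + t := by
      rw [hS, List.toFinset_card_of_nodup hLnd, List.length_flatten,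
        sum_lengths_eq L hLne]
    have hFcard : F.card = m := by
      rw [hF, List.toFinset_card_of_nodup hLcnd, List.length_flatten, List.map_map]
      rw [hm]
      congr 1
      apply List.map_congr_left
      intro l _
      simp [Function.comp, ecs_length]
    have htk : t ≤ k := by omega
    -- the pruned graph relation
    set A : V → V → Prop := fun v u => G.Adj v u ∧ v ∉ S ∧ u ∉ S ∧ c v u ∉ F with hA
    have hAsymm : Symmetric A := by
      intro x y ⟨h1, h2, h3, h4⟩
      exact ⟨h1.symm, h3, h2, by rwa [← hc.1 x y h1]⟩
    have hAirr : ∀ v, ¬ A v v := fun v h => G.irrefl h.1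
    have hAc1 : ∀ u v, A u v → c u v = c v u := fun u v h => hc.1 u v h.1
    have hAc2 : ∀ u v w, A u v → A u w → v ≠ w → c u v ≠ c u w :=
      fun u v w h h' => hc.2 u v w h.1 h'.1
    set σ : ℝ := ((m + t : ℕ) : ℝ) * ε / 2 with hσ
    have hσ_nonneg : 0 ≤ σ := by positivity
    have hσ_le : σ ≤ (d + k) * ε / 2 := by
      rw [hσ]
      have h' : ((m + t : ℕ) : ℝ) ≤ d + k := by
        push_cast
        have : (t : ℝ) ≤ (k : ℝ) := by exact_mod_cast htk
        linarith
      have := mul_le_mul_of_nonneg_right h' hε.le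
      linarith
    set a : ℝ := D - σ with ha
    have havg : a * (Fintype.card V) ≤
        ∑ v, ((Finset.univ.filter (A v)).card : ℝ) := by
      have hcs := count_step G c hc S F ε d hd hΔ
      have hcoef : a ≤ d - (S.card : ℝ) * ε / 2 - F.card := by
        rw [ha, hσ, hD, hScard, hFcard]
        push_cast
        linarith
      calc a * (Fintype.card V) ≤ (d - (S.card : ℝ) * ε / 2 - (F.card : ℝ)) * (Fintype.card V) := by
            apply mul_le_mul_of_nonneg_right hcoef (by positivity)
        _ ≤ _ := hcs
    obtain ⟨l, ⟨hlne, hlch, hlnd, hlcnd⟩, hllen⟩ :=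
      exists_rpath_avg A c hAsymm hAirr hAc1 hAc2 a havg
    set e : ℕ := l.length - 1 with he
    have hl_len : l.length = e + 1 := by
      have : 1 ≤ l.length := List.length_pos_iff.2 hlne
      omega
    have he_cast : ((l.length : ℝ) - 1) = (e : ℝ) := by rw [hl_len]; push_cast; ring
    rw [he_cast] at hllen
    by_cases he0 : e = 0
    · -- trivial path: deficit already small
      refine ⟨L, hLne, hLch, hLnd, hLcnd, by omega, ?_⟩
      have : a ≤ 0 := by rw [he0] at hllen; simpa using hllen
      have hDle : D ≤ σ := by rw [ha] at this; linarith
      have hfin : D ≤ ε * d := by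
        have hkd : (k : ℝ) ≤ d := by linarith
        have := mul_nonneg (sub_nonneg.2 hkd) hε.le
        calc D ≤ σ := hDle
          _ ≤ (d + k) * ε / 2 := hσ_le
          _ ≤ ε * d := by nlinarith [this]
      rw [← hm, ← hD]
      exact hfin.trans (le_max_right _ _)
    · -- nontrivial path: truncate and add
      set enew : ℕ := min e ⌈D / 4⌉₊ with henew
      have hceil_pos : 1 ≤ ⌈D / 4⌉₊ := Nat.one_le_ceil_iff.2 (by positivity)
      have henew1 : 1 ≤ enew := le_min (by omega) hceil_pos
      have henew_le_e : enew ≤ e := min_le_left _ _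
      set l' : List V := l.take (enew + 1) with hl'
      have hl'len : l'.length = enew + 1 := by
        rw [hl', List.length_take, hl_len]; omega
      have hl'ch : l'.Chain' A := hlch.take _
      have hl'nd : l'.Nodup := hlnd.sublist (List.take_sublist _ _)
      have hl'ecs : ecs c l' = (ecs c l).take enew := ecs_take c l enew
      have hl'cnd : (ecs c l').Nodup := by
        rw [hl'ecs]; exact hlcnd.sublist (List.take_sublist _ _)
      have hl'ecslen : (ecs c l').length = enew := by
        rw [ecs_length, hl'len]; omega
      -- vertices of l' avoid S
      have hl'S : ∀ x ∈ l', x ∉ S := by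
        intro x hx
        obtain ⟨y, _, hr⟩ := chain'_exists_rel A l' hl'ch (by omega) x hx
        rcases hr with h | h
        · exact h.2.1
        · exact h.2.2.1
      -- colours of l' avoid F
      have hl'F : ∀ x ∈ ecs c l', x ∉ F := by
        intro x hx
        obtain ⟨jj, hjj, rfl⟩ := List.mem_iff_getElem.1 hx
        rw [ecs_getElem]
        have hch' := List.isChain_iff_getElem.1 hl'ch
        have hjj' : jj < l'.length - 1 := by
          rw [hl'ecslen] at hjj; rw [hl'len]; omega
        have := hch' jj (by omega)
        exact this.2.2.2
      refine ⟨l' :: L, ?_, ?_, ?_, ?_, ?_, ?_⟩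
      · intro x hx
        rcases List.mem_cons.1 hx with rfl | hx'
        · intro h; rw [h] at hl'len; simp at hl'len
        · exact hLne x hx'
      · intro x hx
        rcases List.mem_cons.1 hx with rfl | hx'
        · exact hl'ch.imp (fun _ _ h => h.1)
        · exact hLch x hx'
      · rw [List.flatten_cons, List.nodup_append]
        exact ⟨hl'nd, hLnd, fun x hx y hy hxy => hl'S x hx (List.mem_toFinset.2 (hxy ▸ hy))⟩
      · rw [List.map_cons, List.flatten_cons, List.nodup_append]
        exact ⟨hl'cnd, hLcnd, fun x hx y hy hxy => hl'F x hx (List.mem_toFinset.2 (hxy ▸ hy))⟩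
      · simp only [List.length_cons]; omega
      · -- the deficit bound
        have hmnew : ((l' :: L).map fun l => l.length - 1).sum = enew + m := by
          simp only [List.map_cons, List.sum_cons, hl'len]
          omega
        rw [hmnew]
        have henew_lb : (a / 4 : ℝ) ≤ (enew : ℝ) := by
          have h1 : (a / 4 : ℝ) ≤ (e : ℝ) := by linarith
          have h2 : (a / 4 : ℝ) ≤ (⌈D / 4⌉₊ : ℝ) := by
            have : (D / 4 : ℝ) ≤ (⌈D / 4⌉₊ : ℝ) := Nat.le_ceil _
            have : a ≤ D := by rw [ha]; linarith
            have hD4 : (D / 4 : ℝ) ≤ (⌈D / 4⌉₊ : ℝ) := Nat.le_ceil _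
            linarith
          rw [henew]
          push_cast [Nat.cast_min]
          exact le_min h1 h2
        have hDmax : D ≤ (7/8)^i * d := by
          rcases le_max_iff.1 hLD with h | h
          · exact h
          · exact absurd h (not_le.2 hstop)
        have hD' : d - ((enew + m : ℕ) : ℝ) = D - enew := by
          rw [hD]; push_cast; ring
        rw [hD']
        clear_value σ a
        by_cases hcase : ε * (d + k) ≤ D
        · -- contraction case
          have h78 : D - (enew : ℝ) ≤ (7/8) * D := by
            have hσD : σ ≤ D / 2 := by
              calc σ ≤ (d + k) * ε / 2 := hσ_le
                _ ≤ D / 2 := by linarith [hcase]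
            have : a ≥ D / 2 := by rw [ha]; linarith
            linarith
          refine le_trans ?_ (le_max_left _ _)
          calc D - (enew : ℝ) ≤ (7/8) * D := h78
            _ ≤ (7/8) * ((7/8)^i * d) := by linarith [hDmax, h78]
            _ = (7/8)^(i+1) * d := by ring
        · -- boundary case: deficit drops below ε d
          push_neg at hcase
          refine le_trans ?_ (le_max_right _ _)
          have h1 : D - (enew : ℝ) ≤ (3/4) * D + σ / 4 := by
            rw [ha] at henew_lb; linarith
          have h2 : σ ≤ ε * (d + k) / 2 := by linarith [hσ_le]
          have hkd : 7 * (k : ℝ) * ε ≤ d * ε :=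
            mul_le_mul_of_nonneg_right (by linarith : 7 * (k:ℝ) ≤ d) hε.le
          calc D - (enew : ℝ) ≤ (3/4) * D + σ / 4 := h1
            _ ≤ (3/4) * (ε * (d + k)) + (ε * (d + k) / 2) / 4 := by linarith
            _ = (7/8) * ε * d + (7/8) * ε * k := by ring
            _ ≤ ε * d := by linarith

omit [Fintype V] [DecidableEq V] [DecidableEq C] in
lemma forest_to_sigma (G : SimpleGraph V) (c : V → V → C) (L : List (List V))
    (hLne : ∀ l ∈ L, l ≠ []) (hLch : ∀ l ∈ L, l.Chain' G.Adj)
    (hLnd : L.flatten.Nodup) (hLcnd : (L.map (ecs c)).flatten.Nodup) :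
    ∃ (ℓ : Fin L.length → ℕ) (p : ∀ j, Fin (ℓ j + 1) → V),
      IsRainbowPathForest G c ℓ p ∧
      (∑ j, ℓ j) = (L.map fun l => l.length - 1).sum := by
  have hmemL : ∀ j : Fin L.length, L.get j ∈ L := by
    intro j
    have := List.get_mem L j
    simpa using this
  have hlen1 : ∀ j : Fin L.length, 1 ≤ (L.get j).length :=
    fun j => List.length_pos_iff.2 (hLne _ (hmemL j))
  obtain ⟨hEach, hPair⟩ := List.nodup_flatten.1 hLnd
  obtain ⟨hEachC, hPairC⟩ := List.nodup_flatten.1 hLcnd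
  refine ⟨fun j => (L.get j).length - 1,
    fun j i => (L.get j).get ⟨i.val, by
      have h1 : i.val < (L.get j).length - 1 + 1 := i.isLt
      have := hlen1 j; omega⟩,
    ⟨?_, ?_, ?_⟩, ?_⟩
  · -- adjacency
    intro j i
    have hch := List.isChain_iff_getElem.1 (hLch _ (hmemL j))
    have hi : i.val < (L.get j).length - 1 := i.isLt
    exact hch i.val (by omega)
  · -- vertex injectivity
    rintro ⟨j, i⟩ ⟨j', i'⟩ h
    simp only at h
    by_cases hjj : j = j'
    · subst hjj
      have hnd : (L.get j).Nodup := hEach _ (hmemL j)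
      have hvv : i.val = i'.val := by
        have h2 := (List.Nodup.get_inj_iff hnd).1 h
        simpa using congrArg Fin.val h2
      have : i = i' := Fin.ext hvv
      subst this; rfl
    · exfalso
      have hdisj : ∀ (j1 j2 : Fin L.length), j1.val < j2.val →
          (L.get j1).Disjoint (L.get j2) := by
        intro j1 j2 hlt
        have := List.pairwise_iff_getElem.1 hPair j1.val j2.val j1.isLt j2.isLt hlt
        simpa [List.get_eq_getElem] using this
      have hb : i.val < (L.get j).length := by
        have h1 : i.val < (L.get j).length - 1 + 1 := i.isLt
        have := hlen1 j; omega
      have hb' : i'.val < (L.get j').length := by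
        have h1 : i'.val < (L.get j').length - 1 + 1 := i'.isLt
        have := hlen1 j'; omega
      have h2 : (L.get j).get ⟨i.val, hb⟩ = (L.get j').get ⟨i'.val, hb'⟩ := h
      have hx1 : (L.get j).get ⟨i.val, hb⟩ ∈ L.get j := List.get_mem _ _
      have hx2 : (L.get j').get ⟨i'.val, hb'⟩ ∈ L.get j' := List.get_mem _ _
      rcases lt_or_gt_of_ne (fun hv => hjj (Fin.ext hv) : j.val ≠ j'.val) with hlt | hlt
      · exact hdisj j j' hlt (h2 ▸ hx1) hx2
      · exact hdisj j' j hlt hx2 (h2 ▸ hx1)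
  · -- colour injectivity
    rintro ⟨j, i⟩ ⟨j', i'⟩ h
    simp only at h
    have hiC : ∀ (j : Fin L.length) (i : Fin ((L.get j).length - 1)),
        i.val < (ecs c (L.get j)).length := by
      intro j i; rw [ecs_length]; exact i.isLt
    have key : ∀ (j : Fin L.length) (i : Fin ((L.get j).length - 1)),
        c ((L.get j).get ⟨i.val, by have := hlen1 j; have := i.isLt; omega⟩)
          ((L.get j).get ⟨i.val + 1, by have := hlen1 j; have := i.isLt; omega⟩) =
        (ecs c (L.get j)).get ⟨i.val, hiC j i⟩ := by
      intro j i
      exact (ecs_getElem c (L.get j) i.val (hiC j i)).symm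
    have h' : (ecs c (L.get j)).get ⟨i.val, hiC j i⟩ =
        (ecs c (L.get j')).get ⟨i'.val, hiC j' i'⟩ :=
      (key j i).symm.trans (h.trans (key j' i'))
    by_cases hjj : j = j'
    · subst hjj
      have hnd : (ecs c (L.get j)).Nodup :=
        hEachC _ (List.mem_map_of_mem (hmemL j))
      have hvv : i.val = i'.val := by
        have h2 := (List.Nodup.get_inj_iff hnd).1 h'
        simpa using congrArg Fin.val h2
      have : i = i' := Fin.ext hvv
      subst this; rfl
    · exfalso
      have hCL : ∀ (j1 j2 : Fin L.length), j1.val < j2.val →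
          (ecs c (L.get j1)).Disjoint (ecs c (L.get j2)) := by
        intro j1 j2 hlt
        have hb1 : j1.val < (L.map (ecs c)).length := by simpa using j1.isLt
        have hb2 : j2.val < (L.map (ecs c)).length := by simpa using j2.isLt
        have := List.pairwise_iff_getElem.1 hPairC j1.val j2.val hb1 hb2 hlt
        simpa [List.get_eq_getElem] using this
      have hx1 : (ecs c (L.get j)).get ⟨i.val, hiC j i⟩ ∈ ecs c (L.get j) :=
        List.get_mem _ _
      have hx2 : (ecs c (L.get j')).get ⟨i'.val, hiC j' i'⟩ ∈ ecs c (L.get j') :=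
        List.get_mem _ _
      rcases lt_or_gt_of_ne (fun hv => hjj (Fin.ext hv) : j.val ≠ j'.val) with hlt | hlt
      · exact hCL j j' hlt (h' ▸ hx1) hx2
      · exact hCL j' j hlt hx2 (h' ▸ hx1)
  · -- sum
    have hsum : (L.map (fun l => l.length - 1)).sum
        = ∑ j : Fin L.length, ((L.get j).length - 1) := by
      conv_lhs => rw [← List.ofFn_get L]
      rw [List.map_ofFn, List.sum_ofFn]
      simp [Function.comp]
    rw [hsum]


/-- For every `ε > 0` there exists `d₀` such that for all `d ≥ d₀`: every properly
edge-coloured graph on `n` vertices with average degree at least `d` and maximum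
degree at most `εn/4` contains a rainbow path forest with at most
`⌈log_{8/7}(1/ε)⌉` components and at least `(1-ε)d` edges. -/
theorem stmt7 (ε : ℝ) (hε : 0 < ε) :
    ∃ d₀ : ℝ, ∀ d : ℝ, d₀ ≤ d →
      ∀ (V C : Type) [Fintype V] [Nonempty V] (G : SimpleGraph V) (c : V → V → C),
        IsProperEdgeColoring G c →
        d * Fintype.card V ≤ 2 * (G.edgeSet.ncard : ℝ) →
        (∀ v, ((G.neighborSet v).ncard : ℝ) ≤ ε * Fintype.card V / 4) →
        ∃ (t : ℕ) (ℓ : Fin t → ℕ) (p : ∀ j, Fin (ℓ j + 1) → V),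
          IsRainbowPathForest G c ℓ p ∧
          t ≤ ⌈Real.logb (8 / 7) ε⁻¹⌉₊ ∧
          (1 - ε) * d ≤ ((∑ j, ℓ j : ℕ) : ℝ) := by
  classical
  set k : ℕ := ⌈Real.logb (8 / 7) ε⁻¹⌉₊ with hk
  refine ⟨8 * ((k : ℝ) + 1), ?_⟩
  intro d hd0 V C _ _ G c hc hd hΔ
  have hd_pos : (0:ℝ) < d := lt_of_lt_of_le (by positivity) hd0
  by_cases hε1 : 1 ≤ ε
  · refine ⟨0, Fin.elim0, fun j => j.elim0, ⟨fun j => j.elim0, ?_, ?_⟩, Nat.zero_le _, ?_⟩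
    · intro q; exact q.1.elim0
    · intro q; exact q.1.elim0
    · simp only [Finset.univ_eq_empty, Finset.sum_empty, Nat.cast_zero]
      nlinarith
  · push_neg at hε1
    haveI : DecidableRel G.Adj := Classical.decRel _
    obtain ⟨L, h1, h2, h3, h4, hlen, hD⟩ :=
      main_loop G c ⟨hc.1, hc.2⟩ ε d hε k hd0 hd hΔ k le_rfl
    have hPpos : (0:ℝ) < (8/7:ℝ)^k := by positivity
    have hpow : (7/8:ℝ)^k ≤ ε := by
      have hlogb : Real.logb (8/7) ε⁻¹ ≤ (k:ℝ) := by rw [hk]; exact Nat.le_ceil _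
      have h2' : ε⁻¹ ≤ (8/7:ℝ)^((k:ℝ)) :=
        (Real.logb_le_iff_le_rpow (by norm_num) (by positivity)).1 hlogb
      rw [Real.rpow_natCast] at h2'
      have hinv : (7/8:ℝ)^k = ((8/7:ℝ)^k)⁻¹ := by rw [← inv_pow]; norm_num
      rw [hinv]
      exact inv_le_of_inv_le₀ hε h2'
    have hfinal : (1 - ε) * d ≤ (((L.map fun l => l.length - 1).sum : ℕ) : ℝ) := by
      have hmax : max ((7/8:ℝ)^k * d) (ε * d) ≤ ε * d :=
        max_le (by nlinarith) le_rfl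
      have := hD.trans hmax
      linarith
    obtain ⟨ℓ, p, hforest, hsum⟩ := forest_to_sigma G c L h1 h2 h3 h4
    refine ⟨L.length, ℓ, p, hforest, ?_, ?_⟩
    · exact hlen
    · rw [hsum]; exact hfinal
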